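/- Let k be a field and (R, m) an even-dimensional local Frobenius k-algebra with R/m ≅ k. Then the determinant of a nondegenerate associative bilinear form B on R (computed via the matrix of B in any k-basis), taken as an element of the square class group k∖{0} modulo squares, is independent of the choice of the form B and of the basis. -/

import Mathlib

open Polynomial Matrix

lemma det_one_add_of_isNilpotent {K : Type*} [Field K] {ι : Type*} [Fintype ι] [DecidableEq ι]
    (N : Matrix ι ι K) (h : IsNilpotent N) : (1 + N).det = 1 := by
  have hu := Matrix.isUnit_charpolyRev_of_isNilpotent h
  obtain ⟨r, hr, hCr⟩ := Polynomial.isUnit_iff.mp hu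
  have h0 : r = 1 := by
    have := Matrix.eval_charpolyRev (M := N)
    rw [← hCr] at this
    simpa using this
  have hrev : N.charpolyRev = 1 := by rw [← hCr, h0, Polynomial.C_1]
  have : Polynomial.eval (-1 : K) N.charpolyRev = 1 := by rw [hrev]; simp
  rw [Matrix.charpolyRev] at this
  rw [← coe_evalRingHom, RingHom.map_det] at this
  convert this using 2
  ext i j
  rcases eq_or_ne i j with rfl | hij
  · simp [Matrix.one_apply, Matrix.map_apply]
  · simp [Matrix.one_apply, hij, Matrix.map_apply]

lemma aux_nilpotent {k : Type*} [Field k] {R : Type*} [Ring R] [Algebra k R]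
    [FiniteDimensional k R] (ε : R →ₐ[k] k) (hlocal : ∀ y : R, IsUnit y ↔ ε y ≠ 0)
    (w : R) (hw : ε w = 0) : IsNilpotent w := by
  have hint : IsIntegral k w := IsIntegral.of_finite k w
  set p := minpoly k w with hp
  have hp0 : p ≠ 0 := minpoly.ne_zero hint
  set m := p.rootMultiplicity 0 with hm
  set q := p /ₘ (X - C 0) ^ m with hqdef
  have heq : (X - C 0) ^ m * q = p := p.pow_mul_divByMonic_rootMultiplicity_eq 0
  have hq0 : q.eval 0 ≠ 0 := eval_divByMonic_pow_rootMultiplicity_ne_zero 0 hp0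
  have haev : (aeval w) p = 0 := minpoly.aeval k w
  have hprod : w ^ m * (aeval w) q = 0 := by
    have := congrArg (aeval w) heq
    simpa [haev] using this
  have hunit : IsUnit ((aeval w) q) := by
    rw [hlocal]
    have : ε ((aeval w) q) = (aeval (ε w)) q := (aeval_algHom_apply ε w q).symm
    rw [this, hw]
    simpa [Polynomial.aeval_def, Polynomial.eval] using hq0
  obtain ⟨v, hv⟩ := hunit
  refine ⟨m, ?_⟩
  calc w ^ m = w ^ m * (↑v * ↑v⁻¹) := by simp
    _ = w ^ m * (aeval w) q * ↑v⁻¹ := by rw [← mul_assoc, hv]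
    _ = 0 := by rw [hprod, zero_mul]

/-- Let `(R, m)` be an even-dimensional local Frobenius `k`-algebra with `R/m ≅ k`
(encoded via `ε : R →ₐ[k] k` with units exactly the elements outside `m = ker ε`).
Then the determinant of a nondegenerate associative bilinear form on `R`, computed
via its matrix in any basis and taken modulo nonzero squares, is independent of the
choice of the form and of the basis: for two such forms `B`, `B'` and bases `b`, `b'`,
the two determinants differ by a nonzero square. -/
theorem stmt19 (k : Type*) [Field k]
    (R : Type*) [Ring R] [Algebra k R] [FiniteDimensional k R]
    (ε : R →ₐ[k] k) (hlocal : ∀ y : R, IsUnit y ↔ ε y ≠ 0)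
    (heven : Even (Module.finrank k R))
    (ι ι' : Type*) [Fintype ι] [DecidableEq ι] [Fintype ι'] [DecidableEq ι']
    (b : Module.Basis ι k R) (b' : Module.Basis ι' k R)
    (B B' : LinearMap.BilinForm k R)
    (hnd : B.Nondegenerate) (hassoc : ∀ r s t : R, B (r * s) t = B r (s * t))
    (hnd' : B'.Nondegenerate) (hassoc' : ∀ r s t : R, B' (r * s) t = B' r (s * t)) :
    ∃ c : k, c ≠ 0 ∧
      (BilinForm.toMatrix b' B').det = c ^ 2 * (BilinForm.toMatrix b B).det := by
  classical
  -- find u with B u · = B' 1 ·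
  obtain ⟨u, hu⟩ : ∃ u : R, ∀ x, B u x = B' 1 x := by
    refine ⟨(B.toDual hnd).symm (B' 1), fun x => ?_⟩
    have h := (B.toDual hnd).apply_symm_apply (B' 1)
    calc B ((B.toDual hnd).symm (B' 1)) x
        = (B.toDual hnd) ((B.toDual hnd).symm (B' 1)) x := by
          rw [LinearMap.BilinForm.toDual_def]
      _ = B' 1 x := by rw [h]
  set L : Module.End k R := Algebra.lmul k R u with hL
  have hLapp : ∀ x : R, L x = u * x := fun x => rfl
  have hcomp : B' = B.compLeft L := by
    ext x y
    have h1 : B' x y = B' 1 (x * y) := by rw [← hassoc' 1 x y, one_mul]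
    have h2 : (B.compLeft L) x y = B (u * x) y := rfl
    rw [h1, h2, hassoc u x y, hu]
  -- u is invertible modulo ε
  have hinj : Function.Injective L := by
    rw [← LinearMap.ker_eq_bot, LinearMap.ker_eq_bot']
    intro x hx
    refine hnd'.1 x (fun y => ?_)
    rw [hcomp]
    show B (L x) y = 0
    rw [hx, map_zero, LinearMap.zero_apply]
  obtain ⟨v, hv⟩ := (LinearMap.injective_iff_surjective.mp hinj) 1
  have hεu : ε u ≠ 0 := by
    intro h0
    have huv : u * v = 1 := hv
    have : ε u * ε v = 1 := by rw [← _root_.map_mul, huv, _root_.map_one]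
    rw [h0, zero_mul] at this
    exact zero_ne_one this
  set e0 : k := ε u with he0
  set w : R := u - algebraMap k R e0 with hwdef
  have hwε : ε w = 0 := by
    simp [hwdef, AlgHom.commutes, he0]
  have hwn : IsNilpotent w := aux_nilpotent ε hlocal w hwε
  -- matrix of L
  set A : Matrix ι ι k := LinearMap.toMatrix b b L with hA
  set Nm : Matrix ι ι k := LinearMap.toMatrix b b (Algebra.lmul k R w) with hNm
  have hLdec : L = e0 • LinearMap.id + Algebra.lmul k R w := by
    ext x
    show u * x = e0 • x + w * x
    rw [hwdef, sub_mul, Algebra.smul_def]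
    abel
  have hAdec : A = e0 • (1 : Matrix ι ι k) + Nm := by
    rw [hA, hLdec, _root_.map_add, _root_.map_smul, LinearMap.toMatrix_id]
  have hNmnil : IsNilpotent Nm := by
    have h1 : IsNilpotent (Algebra.lmul k R w) := hwn.map (Algebra.lmul k R)
    have h2 : Nm = LinearMap.toMatrixAlgEquiv b (Algebra.lmul k R w) := rfl
    rw [h2]
    exact h1.map (LinearMap.toMatrixAlgEquiv b)
  have hAdet : A.det = e0 ^ Fintype.card ι := by
    have he0ne : e0 ≠ 0 := hεu
    have hsmul : A = e0 • (1 + e0⁻¹ • Nm) := by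
      rw [smul_add, smul_smul, mul_inv_cancel₀ he0ne, one_smul, hAdec]
    rw [hsmul, Matrix.det_smul, det_one_add_of_isNilpotent _ ?_, mul_one]
    obtain ⟨j, hj⟩ := hNmnil
    exact ⟨j, by rw [_root_.smul_pow, hj, smul_zero]⟩
  -- even exponent
  obtain ⟨mh, hmh⟩ : Even (Fintype.card ι) := by
    rwa [Module.finrank_eq_card_basis b] at heven
  -- bases
  set eqv : ι ≃ ι' := b.indexEquiv b' with heqv
  set b'' : Module.Basis ι k R := b'.reindex eqv.symm with hb''
  have h4 : BilinForm.toMatrix b'' B' = (BilinForm.toMatrix b' B').submatrix eqv eqv := by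
    ext i j
    simp [BilinForm.toMatrix, BilinForm.toMatrix_apply, hb'', Module.Basis.reindex_apply, Matrix.submatrix_apply]
  have h5 : (BilinForm.toMatrix b'' B').det = (BilinForm.toMatrix b' B').det := by
    rw [h4, Matrix.det_submatrix_equiv_self]
  set V : Matrix ι ι k := b.toMatrix b'' with hV
  have h6 : Vᵀ * BilinForm.toMatrix b B' * V = BilinForm.toMatrix b'' B' :=
    BilinForm.toMatrix_mul_basis_toMatrix b b'' B'
  have h3 : BilinForm.toMatrix b B' = Aᵀ * BilinForm.toMatrix b B := by
    rw [hcomp]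
    exact BilinForm.toMatrix_compLeft b B L
  have hVdet : V.det ≠ 0 := by
    have : Invertible V := b.invertibleToMatrix b''
    have : IsUnit V := isUnit_of_invertible V
    exact ((Matrix.isUnit_iff_isUnit_det V).mp this).ne_zero
  refine ⟨V.det * e0 ^ mh, mul_ne_zero hVdet (pow_ne_zero _ hεu), ?_⟩
  calc (BilinForm.toMatrix b' B').det
      = (BilinForm.toMatrix b'' B').det := h5.symm
    _ = (Vᵀ * BilinForm.toMatrix b B' * V).det := by rw [h6]
    _ = V.det * ((BilinForm.toMatrix b B').det) * V.det := by
        rw [Matrix.det_mul, Matrix.det_mul, Matrix.det_transpose]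
    _ = V.det * (A.det * (BilinForm.toMatrix b B).det) * V.det := by
        rw [h3, Matrix.det_mul, Matrix.det_transpose]
    _ = (V.det * e0 ^ mh) ^ 2 * (BilinForm.toMatrix b B).det := by
        rw [hAdet, hmh, pow_add]
        ring
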